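/- Let θ > 0 and let U ⊆ ℝ/ℤ be such that U and U + θ (mod 1) are at positive distance in the torus. Let A = {m ∈ ℕ : {θ log₂ m} ∈ U}, where {x} denotes fractional part. Then there is no infinite set B ⊆ ℕ and t ∈ ℕ with B + B + t ⊆ A. -/

import Mathlib

open Filter
open scoped Classical

noncomputable def countIn (A : Set ℕ) (N : ℕ) : ℕ :=
  ((Finset.Icc 1 N).filter (fun n => n ∈ A)).card

noncomputable def upperDensity (A : Set ℕ) : ℝ :=
  limsup (fun N => (countIn A N : ℝ) / N) atTop

noncomputable def lowerDensity (A : Set ℕ) : ℝ :=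
  liminf (fun N => (countIn A N : ℝ) / N) atTop

def hasDensity (A : Set ℕ) (d : ℝ) : Prop :=
  Tendsto (fun N => (countIn A N : ℝ) / N) atTop (nhds d)

lemma addcircle_dist_le (x y : ℝ) :
    dist ((x : AddCircle (1:ℝ))) ((y : AddCircle (1:ℝ))) ≤ |x - y| := by
  rw [dist_eq_norm]
  have : ((x : AddCircle (1:ℝ))) - ((y : AddCircle (1:ℝ))) = ((x - y : ℝ) : AddCircle (1:ℝ)) := by
    norm_cast
  rw [this]
  exact le_of_le_of_eq (QuotientAddGroup.norm_mk_le_norm (m := x - y)) (Real.norm_eq_abs _)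

lemma ratio_tendsto (b t : ℕ) :
    Tendsto (fun n : ℕ => ((n : ℝ) + n + t) / ((b : ℝ) + n + t)) atTop (nhds 2) := by
  have h1 : Tendsto (fun n : ℕ => ((n:ℝ) + n + t) / ((b:ℝ) + n + t)) atTop (nhds 2) := by
    have key : ∀ᶠ n : ℕ in atTop,
        ((n:ℝ) + n + t) / ((b:ℝ) + n + t) = (1 + 1 + t / n) / ((b:ℝ)/n + 1 + t/n) := by
      filter_upwards [eventually_gt_atTop 0] with n hn
      have hn' : (n : ℝ) ≠ 0 := by positivity
      field_simp
    rw [tendsto_congr' key]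
    have hz : Tendsto (fun n : ℕ => (1:ℝ) / n) atTop (nhds 0) := tendsto_one_div_atTop_nhds_zero_nat
    have hc : ∀ c : ℝ, Tendsto (fun n : ℕ => c / (n:ℝ)) atTop (nhds 0) := by
      intro c
      have := hz.const_mul c
      simpa [div_eq_mul_inv, mul_comm, mul_assoc] using this
    have hnum : Tendsto (fun n : ℕ => (1:ℝ) + 1 + t / n) atTop (nhds 2) := by
      have := (tendsto_const_nhds (x := (2:ℝ)) (f := atTop (α := ℕ))).add (hc t)
      simpa [one_add_one_eq_two] using this
    have hden : Tendsto (fun n : ℕ => (b:ℝ)/n + 1 + t/n) atTop (nhds 1) := by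
      have := ((hc b).add (tendsto_const_nhds (x := (1:ℝ)))).add (hc t)
      simpa using this
    have := hnum.div hden one_ne_zero
    rw [div_one] at this
    exact this
  exact h1

theorem no_BBt_log_example (θ : ℝ) (hθ : 0 < θ) (U : Set (AddCircle (1 : ℝ)))
    (hsep : ∃ ε > 0, ∀ u ∈ U, ∀ v ∈ U, ε ≤ dist u (v + (θ : AddCircle (1 : ℝ)))) :
    ∀ (B : Set ℕ) (t : ℕ), B.Infinite →
      ¬ (∀ b₁ ∈ B, ∀ b₂ ∈ B,
          ((θ * Real.logb 2 (b₁ + b₂ + t) : ℝ) : AddCircle (1 : ℝ)) ∈ U) := by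
  intro B t hB h
  obtain ⟨ε, hε, hsep⟩ := hsep
  obtain ⟨b, hb⟩ := hB.nonempty
  -- the "gap" function tends to θ
  have hgap : Tendsto
      (fun n : ℕ => θ * Real.logb 2 ((n:ℝ) + n + t) - θ * Real.logb 2 ((b:ℝ) + n + t))
      atTop (nhds θ) := by
    have key : ∀ᶠ n : ℕ in atTop,
        θ * Real.logb 2 ((n:ℝ) + n + t) - θ * Real.logb 2 ((b:ℝ) + n + t)
          = θ * Real.logb 2 (((n:ℝ) + n + t) / ((b:ℝ) + n + t)) := by
      filter_upwards [eventually_gt_atTop 0] with n hn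
      have h1 : ((n:ℝ) + n + t) ≠ 0 := by positivity
      have h2 : ((b:ℝ) + n + t) ≠ 0 := by positivity
      rw [Real.logb_div h1 h2]
      ring
    rw [tendsto_congr' key]
    have hcont : ContinuousAt (fun x : ℝ => θ * Real.logb 2 x) 2 := by
      apply ContinuousAt.mul continuousAt_const
      unfold Real.logb
      exact (Real.continuousAt_log (by norm_num)).div_const _
    have := hcont.tendsto.comp (ratio_tendsto b t)
    simpa [Function.comp_def, Real.logb_self_eq_one (by norm_num : (1:ℝ) < 2)] using this
  have hev : ∀ᶠ n : ℕ in atTop,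
      |(θ * Real.logb 2 ((n:ℝ) + n + t) - θ * Real.logb 2 ((b:ℝ) + n + t)) - θ| < ε := by
    have := hgap (Metric.ball_mem_nhds θ hε)
    filter_upwards [this] with n hn
    rw [Set.mem_preimage, Metric.mem_ball, Real.dist_eq] at hn
    exact hn
  obtain ⟨N, hN⟩ := eventually_atTop.mp hev
  obtain ⟨b', hb'B, hb'N⟩ := hB.exists_gt N
  have hclose := hN b' (le_of_lt hb'N)
  -- now apply separation to the two points
  have hu : ((θ * Real.logb 2 ((b':ℝ) + b' + t) : ℝ) : AddCircle (1:ℝ)) ∈ U := h b' hb'B b' hb'B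
  have hv : ((θ * Real.logb 2 ((b:ℝ) + b' + t) : ℝ) : AddCircle (1:ℝ)) ∈ U := h b hb b' hb'B
  have hs := hsep _ hu _ hv
  set x := θ * Real.logb 2 ((b:ℝ) + b' + t)
  set y := θ * Real.logb 2 ((b':ℝ) + b' + t)
  have hco : ((x : ℝ) : AddCircle (1:ℝ)) + (θ : AddCircle (1:ℝ)) = ((x + θ : ℝ) : AddCircle (1:ℝ)) := by
    norm_cast
  rw [hco] at hs
  have hd : dist ((y : ℝ) : AddCircle (1:ℝ)) ((x + θ : ℝ) : AddCircle (1:ℝ)) ≤ |y - (x + θ)| :=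
    addcircle_dist_le _ _
  have h1 : ε ≤ |y - x - θ| := by
    have h2 := le_trans hs hd
    rwa [show y - (x + θ) = y - x - θ by ring] at h2
  linarith
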